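/- For every n-vertex graph G with track-number tn(G), and for every real r with 1 ≤ r ≤ n/tn(G), G has a three-dimensional drawing of dimensions at most (2n/r) × (4n/r) × 4n; thus G has a drawing with volume at most 32n³/r² and aspect ratio 2r. -/

import Mathlib

open SimpleGraph

/-- A (proper) track layout of the graph `G` with `t` tracks.
`track v` is the track (colour class) of vertex `v`, and `pos v` gives the
position of `v` in the total order of its track. -/
structure TrackLayout (V : Type) (G : SimpleGraph V) (t : ℕ) where
  /-- the track containing each vertex -/
  track : V → Fin t
  /-- the position of each vertex within its track -/
  pos : V → ℕ
  /-- distinct vertices on a common track occupy distinct positions -/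
  inj : ∀ v w : V, track v = track w → pos v = pos w → v = w
  /-- the tracks form a proper vertex colouring -/
  proper : ∀ v w : V, G.Adj v w → track v ≠ track w
  /-- no X-crossing: there are no edges `vw` and `xy` with `v, x` on one track,
  `w, y` on another track, `v <ᵢ x` and `y <ⱼ w` -/
  noX : ∀ v w x y : V, G.Adj v w → G.Adj x y →
    track v = track x → track w = track y → track v ≠ track w →
    pos v < pos x → pos y < pos w → False
/-- The track-number of `G`: the minimum `t` such that `G` has a `t`-track layout. -/
noncomputable def trackNumber (V : Type) (G : SimpleGraph V) : ℕ :=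
  sInf {t : ℕ | Nonempty (TrackLayout V G t)}
/-- The point of `ℝ³` corresponding to a grid-point of `ℤ³`. -/
def gridPt (p : Fin 3 → ℤ) : Fin 3 → ℝ := fun i => (p i : ℝ)

/-- A three-dimensional straight-line grid drawing of `G`: vertices are represented by
distinct points of `ℤ³`, edges by the closed segments between their end-vertices;
an edge only intersects a vertex that is an end-vertex of that edge, and two edge
segments intersect only at a common end-vertex. -/
structure Drawing3D (V : Type) (G : SimpleGraph V) where
  /-- the grid-point representing each vertex -/
  pos : V → Fin 3 → ℤ
  inj : Function.Injective pos
  /-- an edge segment intersects a vertex point only at an end-vertex of the edge -/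
  vertexDisjoint : ∀ v w x : V, G.Adj v w →
    gridPt (pos x) ∈ segment ℝ (gridPt (pos v)) (gridPt (pos w)) → x = v ∨ x = w
  /-- the segments of two distinct edges intersect only at a common end-vertex -/
  edgesDisjoint : ∀ v w x y : V, G.Adj v w → G.Adj x y →
    ¬ ((x = v ∧ y = w) ∨ (x = w ∧ y = v)) →
    ∀ p : Fin 3 → ℝ, p ∈ segment ℝ (gridPt (pos v)) (gridPt (pos w)) →
      p ∈ segment ℝ (gridPt (pos x)) (gridPt (pos y)) →
      (p = gridPt (pos v) ∧ (v = x ∨ v = y)) ∨ (p = gridPt (pos w) ∧ (w = x ∨ w = y))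

/-- The drawing fits in an axis-aligned box with side lengths `X-1`, `Y-1` and `Z-1`
(i.e. it is an `X × Y × Z` drawing). -/
def Drawing3D.InBox {V : Type} {G : SimpleGraph V} (D : Drawing3D V G)
    (X Y Z : ℕ) : Prop :=
  ∃ o : Fin 3 → ℤ, ∀ v : V,
    o 0 ≤ D.pos v 0 ∧ D.pos v 0 < o 0 + X ∧
    o 1 ≤ D.pos v 1 ∧ D.pos v 1 < o 1 + Y ∧
    o 2 ≤ D.pos v 2 ∧ D.pos v 2 < o 2 + Z

namespace DrawAux

open Matrix

/-- y-coordinate -/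
def yv (q c : ℕ) : ℕ := c ^ 2 % q
/-- z-coordinate -/
def zv (q c k : ℕ) : ℕ := q * k + c ^ 3 % q

/-- the real point used in the drawing -/
noncomputable def pt (q c k : ℕ) : Fin 3 → ℝ :=
  ![(c : ℝ), (yv q c : ℝ), (zv q c k : ℝ)]

def rowZ4 (q c k : ℕ) : Fin 4 → ℤ :=
  ![1, (c : ℤ), (yv q c : ℤ), (zv q c k : ℤ)]

def rowZ3 (q c : ℕ) : Fin 3 → ℤ := ![1, (c : ℤ), (yv q c : ℤ)]

lemma rowZ4_cast (q c k : ℕ) (j : Fin 4) :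
    ((rowZ4 q c k j : ℤ) : ZMod q) = (c : ZMod q) ^ (j : ℕ) := by
  fin_cases j <;> simp [rowZ4, yv, zv] <;> push_cast [ZMod.natCast_mod] <;> ring

lemma rowZ3_cast (q c : ℕ) (j : Fin 3) :
    ((rowZ3 q c j : ℤ) : ZMod q) = (c : ZMod q) ^ (j : ℕ) := by
  fin_cases j <;> simp [rowZ3, yv] <;> push_cast [ZMod.natCast_mod] <;> ring

lemma castinj (q : ℕ) [NeZero q] {a b : ℕ} (ha : a < q) (hb : b < q)
    (h : (a : ZMod q) = (b : ZMod q)) : a = b := by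
  have := congrArg ZMod.val h
  rwa [ZMod.val_natCast_of_lt ha, ZMod.val_natCast_of_lt hb] at this

lemma det3_ne_zero (q : ℕ) (hq : q.Prime) (c : Fin 3 → ℕ) (hlt : ∀ i, c i < q)
    (hinj : ∀ i j, c i = c j → i = j) :
    (Matrix.of fun i j => ((rowZ3 q (c i) j : ℤ) : ℝ)).det ≠ 0 := by
  haveI : Fact q.Prime := ⟨hq⟩
  haveI : NeZero q := ⟨hq.ne_zero⟩
  set A : Matrix (Fin 3) (Fin 3) ℤ := Matrix.of fun i j => rowZ3 q (c i) j with hA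
  have hAdet : A.det ≠ 0 := by
    intro h0
    have h1 : A.map (fun x : ℤ => (x : ZMod q)) = Matrix.vandermonde fun i => ((c i : ℕ) : ZMod q) := by
      ext i j
      simp only [Matrix.map_apply, Matrix.vandermonde, Matrix.of_apply, hA]
      exact rowZ3_cast q (c i) j
    have h2 : (A.map (fun x : ℤ => (x : ZMod q))).det = 0 := by
      have h3 := RingHom.map_det (Int.castRingHom (ZMod q)) A
      simp only [RingHom.mapMatrix_apply] at h3
      rw [show A.map (fun x : ℤ => (x : ZMod q)) = A.map (Int.castRingHom (ZMod q)) from rfl, ← h3, h0]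
      simp
    rw [h1] at h2
    have h4 : Function.Injective fun i => ((c i : ℕ) : ZMod q) := by
      intro i j hij
      exact hinj i j (castinj q (hlt i) (hlt j) hij)
    exact (Matrix.det_vandermonde_ne_zero_iff.mpr h4) h2
  have h5 := RingHom.map_det (Int.castRingHom ℝ) A
  simp only [RingHom.mapMatrix_apply] at h5
  have h6 : (Matrix.of fun i j => ((rowZ3 q (c i) j : ℤ) : ℝ)) = A.map (Int.castRingHom ℝ) := rfl
  rw [h6, ← h5]
  simpa using hAdet

lemma det4_ne_zero (q : ℕ) (hq : q.Prime) (c k : Fin 4 → ℕ) (hlt : ∀ i, c i < q)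
    (hinj : ∀ i j, c i = c j → i = j) :
    (Matrix.of fun i j => ((rowZ4 q (c i) (k i) j : ℤ) : ℝ)).det ≠ 0 := by
  haveI : Fact q.Prime := ⟨hq⟩
  haveI : NeZero q := ⟨hq.ne_zero⟩
  set A : Matrix (Fin 4) (Fin 4) ℤ := Matrix.of fun i j => rowZ4 q (c i) (k i) j with hA
  have hAdet : A.det ≠ 0 := by
    intro h0
    have h1 : A.map (fun x : ℤ => (x : ZMod q)) = Matrix.vandermonde fun i => ((c i : ℕ) : ZMod q) := by
      ext i j
      simp only [Matrix.map_apply, Matrix.vandermonde, Matrix.of_apply, hA]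
      exact rowZ4_cast q (c i) (k i) j
    have h2 : (A.map (fun x : ℤ => (x : ZMod q))).det = 0 := by
      have h3 := RingHom.map_det (Int.castRingHom (ZMod q)) A
      simp only [RingHom.mapMatrix_apply] at h3
      rw [show A.map (fun x : ℤ => (x : ZMod q)) = A.map (Int.castRingHom (ZMod q)) from rfl, ← h3, h0]
      simp
    rw [h1] at h2
    have h4 : Function.Injective fun i => ((c i : ℕ) : ZMod q) := by
      intro i j hij
      exact hinj i j (castinj q (hlt i) (hlt j) hij)
    exact (Matrix.det_vandermonde_ne_zero_iff.mpr h4) h2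
  have h5 := RingHom.map_det (Int.castRingHom ℝ) A
  simp only [RingHom.mapMatrix_apply] at h5
  have h6 : (Matrix.of fun i j => ((rowZ4 q (c i) (k i) j : ℤ) : ℝ)) = A.map (Int.castRingHom ℝ) := rfl
  rw [h6, ← h5]
  simpa using hAdet

end DrawAux

namespace DrawAux
open Matrix

lemma bridge (m n : ℕ) : (((m : ℤ) % (n : ℤ) : ℤ) : ℝ) = ((m % n : ℕ) : ℝ) := by
  rw [← Int.natCast_mod, Int.cast_natCast]

lemma combo3 (q : ℕ) (hq : q.Prime) (c : Fin 3 → ℕ) (hlt : ∀ i, c i < q)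
    (hinj : ∀ i j, c i = c j → (i = j)) (u : Fin 3 → ℝ)
    (h0 : u 0 + u 1 + u 2 = 0)
    (hx : u 0 * (c 0 : ℝ) + u 1 * (c 1 : ℝ) + u 2 * (c 2 : ℝ) = 0)
    (hy : u 0 * (yv q (c 0) : ℝ) + u 1 * (yv q (c 1) : ℝ) + u 2 * (yv q (c 2) : ℝ) = 0) :
    u 0 = 0 ∧ u 1 = 0 ∧ u 2 = 0 := by
  set M : Matrix (Fin 3) (Fin 3) ℝ := Matrix.of fun i j => ((rowZ3 q (c i) j : ℤ) : ℝ) with hM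
  have hdet := det3_ne_zero q hq c hlt hinj
  have hu : u ᵥ* M = 0 := by
    funext j
    simp only [Matrix.vecMul, dotProduct, Fin.sum_univ_three, hM, Matrix.of_apply,
      Pi.zero_apply]
    fin_cases j <;> simp [rowZ3, bridge] <;> linarith
  have := Matrix.eq_zero_of_vecMul_eq_zero hdet hu
  exact ⟨congrFun this 0, congrFun this 1, congrFun this 2⟩

lemma combo4 (q : ℕ) (hq : q.Prime) (c k : Fin 4 → ℕ) (hlt : ∀ i, c i < q)
    (hinj : ∀ i j, c i = c j → (i = j)) (u : Fin 4 → ℝ)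
    (h0 : u 0 + u 1 + u 2 + u 3 = 0)
    (hx : u 0 * (c 0 : ℝ) + u 1 * (c 1 : ℝ) + u 2 * (c 2 : ℝ) + u 3 * (c 3 : ℝ) = 0)
    (hy : u 0 * (yv q (c 0) : ℝ) + u 1 * (yv q (c 1) : ℝ) + u 2 * (yv q (c 2) : ℝ)
        + u 3 * (yv q (c 3) : ℝ) = 0)
    (hz : u 0 * (zv q (c 0) (k 0) : ℝ) + u 1 * (zv q (c 1) (k 1) : ℝ)
        + u 2 * (zv q (c 2) (k 2) : ℝ) + u 3 * (zv q (c 3) (k 3) : ℝ) = 0) :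
    u 0 = 0 ∧ u 1 = 0 ∧ u 2 = 0 ∧ u 3 = 0 := by
  set M : Matrix (Fin 4) (Fin 4) ℝ := Matrix.of fun i j => ((rowZ4 q (c i) (k i) j : ℤ) : ℝ) with hM
  have hdet := det4_ne_zero q hq c k hlt hinj
  have hu : u ᵥ* M = 0 := by
    funext j
    simp only [Matrix.vecMul, dotProduct, Fin.sum_univ_four, hM, Matrix.of_apply,
      Pi.zero_apply]
    fin_cases j <;> simp [rowZ4, bridge] <;> linarith
  have := Matrix.eq_zero_of_vecMul_eq_zero hdet hu
  exact ⟨congrFun this 0, congrFun this 1, congrFun this 2, congrFun this 3⟩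

end DrawAux

namespace DrawAux

lemma seg_coord {P Q p : Fin 3 → ℝ} (h : p ∈ segment ℝ P Q) :
    ∃ a b : ℝ, 0 ≤ a ∧ 0 ≤ b ∧ a + b = 1 ∧ ∀ j, p j = a * P j + b * Q j := by
  obtain ⟨a, b, ha, hb, hab, h⟩ := h
  exact ⟨a, b, ha, hb, hab, fun j => by rw [← h]; simp⟩

lemma pt_apply0 (q c k : ℕ) : pt q c k 0 = (c : ℝ) := rfl
lemma pt_apply1 (q c k : ℕ) : pt q c k 1 = (yv q c : ℝ) := rfl
lemma pt_apply2 (q c k : ℕ) : pt q c k 2 = (zv q c k : ℝ) := rfl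

lemma zv_inj {q c k k' : ℕ} (hq : 0 < q) (h : (zv q c k : ℝ) = (zv q c k' : ℝ)) : k = k' := by
  have h2 : zv q c k = zv q c k' := Nat.cast_inj.mp h
  unfold zv at h2
  have := Nat.mod_lt (c ^ 3) hq
  nlinarith [h2]

lemma zv_lt {q c k k' : ℕ} (hq : 0 < q) (h : k < k') : (zv q c k : ℝ) < (zv q c k' : ℝ) := by
  have hlt : zv q c k < zv q c k' := by
    unfold zv
    have h1 : q * k < q * k' := mul_lt_mul_of_pos_left h hq
    omega
  exact_mod_cast hlt

/-- two segments whose four endpoints lie on four distinct columns are disjoint -/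
lemma quadcol (q : ℕ) (hq : q.Prime) (c0 c1 c2 c3 k0 k1 k2 k3 : ℕ)
    (h0 : c0 < q) (h1 : c1 < q) (h2 : c2 < q) (h3 : c3 < q)
    (d01 : c0 ≠ c1) (d02 : c0 ≠ c2) (d03 : c0 ≠ c3)
    (d12 : c1 ≠ c2) (d13 : c1 ≠ c3) (d23 : c2 ≠ c3)
    {p : Fin 3 → ℝ} (hp1 : p ∈ segment ℝ (pt q c0 k0) (pt q c1 k1))
    (hp2 : p ∈ segment ℝ (pt q c2 k2) (pt q c3 k3)) : False := by
  obtain ⟨a, b, ha, hb, hab, hP⟩ := seg_coord hp1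
  obtain ⟨a', b', ha', hb', hab', hQ⟩ := seg_coord hp2
  have hcv : ∀ i, (![c0, c1, c2, c3] : Fin 4 → ℕ) i < q := by
    intro i; fin_cases i <;> assumption
  have hcinj : ∀ i j, (![c0, c1, c2, c3] : Fin 4 → ℕ) i = ![c0, c1, c2, c3] j → i = j := by
    intro i j hij; fin_cases i <;> fin_cases j <;> simp_all
  have e0 := (hP 0).symm.trans (hQ 0)
  have e1 := (hP 1).symm.trans (hQ 1)
  have e2 := (hP 2).symm.trans (hQ 2)
  simp only [pt_apply0, pt_apply1, pt_apply2] at e0 e1 e2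
  have := combo4 q hq ![c0, c1, c2, c3] ![k0, k1, k2, k3] hcv hcinj ![a, b, -a', -b']
    (by simp; linarith) (by simp; linarith) (by simp; linarith) (by simp; linarith)
  simp at this
  linarith [this.1, this.2.1]

/-- interaction of two segments sharing the column of their first endpoints,
with three distinct columns in play -/
lemma tricol (q : ℕ) (hq : q.Prime) (γ β δ k1 k2 k3 k4 : ℕ)
    (hγ : γ < q) (hβ : β < q) (hδ : δ < q)
    (dβγ : β ≠ γ) (dδγ : δ ≠ γ) (dβδ : β ≠ δ)
    {p : Fin 3 → ℝ} (hp1 : p ∈ segment ℝ (pt q γ k1) (pt q β k3))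
    (hp2 : p ∈ segment ℝ (pt q γ k2) (pt q δ k4)) :
    p = pt q γ k1 ∧ k1 = k2 := by
  obtain ⟨a, b, ha, hb, hab, hP⟩ := seg_coord hp1
  obtain ⟨a', b', ha', hb', hab', hQ⟩ := seg_coord hp2
  have hcv : ∀ i, (![γ, β, δ] : Fin 3 → ℕ) i < q := by
    intro i; fin_cases i <;> assumption
  have hcinj : ∀ i j, (![γ, β, δ] : Fin 3 → ℕ) i = ![γ, β, δ] j → i = j := by
    intro i j hij; fin_cases i <;> fin_cases j <;> simp_all
  have e0 := (hP 0).symm.trans (hQ 0)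
  have e1 := (hP 1).symm.trans (hQ 1)
  simp only [pt_apply0, pt_apply1] at e0 e1
  have hcombo := combo3 q hq ![γ, β, δ] hcv hcinj ![a - a', b, -b']
    (by simp; linarith) (by simp; linarith) (by simp; linarith)
  simp at hcombo
  obtain ⟨haa, hb0, hb'0⟩ := hcombo
  have ha1 : a = 1 := by linarith
  have ha'1 : a' = 1 := by linarith
  have hp1' : p = pt q γ k1 := by
    funext j; rw [hP j, hb0, ha1]; ring
  have hp2' : p = pt q γ k2 := by
    funext j; rw [hQ j, hb'0, ha'1]; ring
  refine ⟨hp1', ?_⟩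
  have := (congrFun hp1' 2).symm.trans (congrFun hp2' 2)
  simp only [pt_apply2] at this
  exact zv_inj hq.pos this

/-- two segments between the same two columns sharing their first endpoint meet
only in that endpoint -/
lemma bicol_common (q : ℕ) (hq : 0 < q) (γ β k1 k3 k4 : ℕ) (hγβ : γ ≠ β) (hk : k3 ≠ k4)
    {p : Fin 3 → ℝ} (hp1 : p ∈ segment ℝ (pt q γ k1) (pt q β k3))
    (hp2 : p ∈ segment ℝ (pt q γ k1) (pt q β k4)) : p = pt q γ k1 := by
  obtain ⟨a, b, ha, hb, hab, hP⟩ := seg_coord hp1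
  obtain ⟨a', b', ha', hb', hab', hQ⟩ := seg_coord hp2
  have e0 := (hP 0).symm.trans (hQ 0)
  simp only [pt_apply0] at e0
  have hγβ' : (γ : ℝ) ≠ (β : ℝ) := by exact_mod_cast hγβ
  have hba : b = b' := by
    have hprod : (a - a') * ((γ : ℝ) - β) = 0 := by
      linear_combination e0 + (β : ℝ) * hab' - (β : ℝ) * hab
    rcases mul_eq_zero.mp hprod with h | h
    · linarith
    · exact absurd (by linarith) hγβ'
  have haa : a = a' := by linarith
  have e2 := (hP 2).symm.trans (hQ 2)
  simp only [pt_apply2] at e2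
  rw [← haa, ← hba] at e2
  have hb0 : b = 0 := by
    have hzz : (zv q β k3 : ℝ) ≠ (zv q β k4 : ℝ) := fun h => hk (zv_inj hq h)
    have hprod : b * ((zv q β k3 : ℝ) - (zv q β k4 : ℝ)) = 0 := by
      linear_combination e2
    rcases mul_eq_zero.mp hprod with h | h
    · exact h
    · exact absurd (by linarith) hzz
  have ha1 : a = 1 := by linarith
  funext j; rw [hP j, hb0, ha1]; ring

/-- two segments between the same two columns with consistently ordered endpoints
are disjoint -/
lemma bicol_order (q : ℕ) (hq : 0 < q) (γ β k1 k2 k3 k4 : ℕ) (hγβ : γ ≠ β)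
    (h12 : k1 < k2) (h34 : k3 < k4)
    {p : Fin 3 → ℝ} (hp1 : p ∈ segment ℝ (pt q γ k1) (pt q β k3))
    (hp2 : p ∈ segment ℝ (pt q γ k2) (pt q β k4)) : False := by
  obtain ⟨a, b, ha, hb, hab, hP⟩ := seg_coord hp1
  obtain ⟨a', b', ha', hb', hab', hQ⟩ := seg_coord hp2
  have e0 := (hP 0).symm.trans (hQ 0)
  simp only [pt_apply0] at e0
  have hγβ' : (γ : ℝ) ≠ (β : ℝ) := by exact_mod_cast hγβ
  have hba : b = b' := by
    have hprod : (a - a') * ((γ : ℝ) - β) = 0 := by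
      linear_combination e0 + (β : ℝ) * hab' - (β : ℝ) * hab
    rcases mul_eq_zero.mp hprod with h | h
    · linarith
    · exact absurd (by linarith) hγβ'
  have haa : a = a' := by rw [hba] at hab; linarith
  have e2 := (hP 2).symm.trans (hQ 2)
  simp only [pt_apply2] at e2
  rw [← haa, ← hba] at e2
  have hz1 := zv_lt (q := q) (c := γ) hq h12
  have hz2 := zv_lt (q := q) (c := β) hq h34
  rcases eq_or_lt_of_le ha with h | h
  · have hb1 : b = 1 := by linarith
    rw [← h, hb1] at e2
    simp at e2
    rw [← Nat.cast_inj (R := ℝ)] at e2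
    linarith
  · have t1 := mul_lt_mul_of_pos_left hz1 h
    have t2 := mul_le_mul_of_nonneg_left hz2.le hb
    linarith

/-- a grid point on a third column cannot lie on a segment between two other columns -/
lemma vertex_not_on (q : ℕ) (hq : q.Prime) (γ β δ k1 k3 k4 : ℕ)
    (hγ : γ < q) (hβ : β < q) (hδ : δ < q)
    (dβγ : β ≠ γ) (dδγ : δ ≠ γ) (dβδ : β ≠ δ)
    (hp : pt q γ k1 ∈ segment ℝ (pt q β k3) (pt q δ k4)) : False := by
  obtain ⟨a, b, ha, hb, hab, hP⟩ := seg_coord hp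
  have hcv : ∀ i, (![γ, β, δ] : Fin 3 → ℕ) i < q := by
    intro i; fin_cases i <;> assumption
  have hcinj : ∀ i j, (![γ, β, δ] : Fin 3 → ℕ) i = ![γ, β, δ] j → i = j := by
    intro i j hij; fin_cases i <;> fin_cases j <;> simp_all
  have e0 := hP 0
  have e1 := hP 1
  simp only [pt_apply0, pt_apply1] at e0 e1
  have hcombo := combo3 q hq ![γ, β, δ] hcv hcinj ![1, -a, -b]
    (by simp; linarith) (by simp; linarith) (by simp; linarith)
  simp at hcombo

end DrawAux

namespace DrawAux

lemma zv_bound {q c k s : ℕ} (hq : 0 < q) (hk : k < s) : zv q c k < q * s := by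
  unfold zv
  have h1 : q * (k + 1) ≤ q * s := Nat.mul_le_mul_left q hk
  have h2 : c ^ 3 % q < q := Nat.mod_lt _ hq
  nlinarith

lemma endpoint_case (q : ℕ) (hq : 0 < q) (γ β kx k1 k3 : ℕ) (hγβ : γ ≠ β)
    (hp : pt q γ kx ∈ segment ℝ (pt q γ k1) (pt q β k3)) : kx = k1 := by
  obtain ⟨a, b, ha, hb, hab, hP⟩ := seg_coord hp
  have e0 := hP 0
  simp only [pt_apply0] at e0
  have hγβ' : (γ : ℝ) ≠ (β : ℝ) := by exact_mod_cast hγβ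
  have hb0 : b = 0 := by
    have hprod : b * ((γ : ℝ) - β) = 0 := by linear_combination e0 + (γ : ℝ) * hab
    rcases mul_eq_zero.mp hprod with h | h
    · exact h
    · exact absurd (by linarith) hγβ'
  have ha1 : a = 1 := by linarith
  have e2 := hP 2
  simp only [pt_apply2, hb0, ha1] at e2
  have : (zv q γ kx : ℝ) = (zv q γ k1 : ℝ) := by linarith
  exact zv_inj hq this

/-- The main construction : a drawing from column/slot data. -/
lemma construct {V : Type} {G : SimpleGraph V}
    (col slot : V → ℕ) (q s K : ℕ) (hq : q.Prime) (hs : 0 < s)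
    (hcolK : ∀ v, col v < K) (hKq : K < q) (hslot : ∀ v, slot v < s)
    (hinj : ∀ v w, col v = col w → slot v = slot w → v = w)
    (hadj : ∀ v w, G.Adj v w → col v ≠ col w)
    (hX : ∀ v w x y, G.Adj v w → G.Adj x y → col v = col x → col w = col y →
      slot v < slot x → slot y < slot w → False) :
    ∃ D : Drawing3D V G, D.InBox K q (q * s) := by
  have hq0 : 0 < q := hq.pos
  have hcolq : ∀ v, col v < q := fun v => (hcolK v).trans hKq
  set P : V → Fin 3 → ℤ :=
    fun v j => ((![col v, yv q (col v), zv q (col v) (slot v)] : Fin 3 → ℕ) j : ℤ) with hP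
  have hgrid : ∀ v, gridPt (P v) = pt q (col v) (slot v) := by
    intro v; funext j; fin_cases j <;> simp [gridPt, hP, pt]
  have hP0 : ∀ v, P v 0 = (col v : ℤ) := fun v => rfl
  have hP1 : ∀ v, P v 1 = (yv q (col v) : ℤ) := fun v => rfl
  have hP2 : ∀ v, P v 2 = (zv q (col v) (slot v) : ℤ) := fun v => rfl
  have hslotinj : ∀ v w, col v = col w → v ≠ w → slot v ≠ slot w := by
    intro v w hc hvw hsl
    exact hvw (hinj v w hc hsl)
  have hPinj : Function.Injective P := by
    intro v w h
    have h0 : col v = col w := by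
      have := congrFun h 0
      rw [hP0, hP0] at this
      exact_mod_cast this
    have h2 : zv q (col v) (slot v) = zv q (col v) (slot w) := by
      have := congrFun h 2
      rw [hP2, hP2, ← h0] at this
      exact_mod_cast this
    unfold zv at h2
    have hsl : slot v = slot w := by
      have := Nat.add_right_cancel h2
      exact Nat.eq_of_mul_eq_mul_left hq0 this
    exact hinj v w h0 hsl
  refine ⟨⟨P, hPinj, ?_, ?_⟩, ?_⟩
  · -- vertexDisjoint
    intro v w x hvw hseg
    rw [hgrid, hgrid, hgrid] at hseg
    by_cases hxv : x = v; · left; exact hxv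
    by_cases hxw : x = w; · right; exact hxw
    exfalso
    have hvwc := hadj v w hvw
    rcases eq_or_ne (col x) (col v) with hcv | hcv
    · rw [hcv] at hseg
      have := endpoint_case q hq0 (col v) (col w) (slot x) (slot v) (slot w) hvwc hseg
      exact hslotinj x v hcv hxv this
    · rcases eq_or_ne (col x) (col w) with hcw | hcw
      · rw [segment_symm, hcw] at hseg
        have := endpoint_case q hq0 (col w) (col v) (slot x) (slot w) (slot v)
          (Ne.symm hvwc) hseg
        exact hslotinj x w hcw hxw this
      · exact vertex_not_on q hq (col x) (col v) (col w) (slot x) (slot v) (slot w)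
          (hcolq x) (hcolq v) (hcolq w) (Ne.symm hcv) (Ne.symm hcw) hvwc hseg
  · -- edgesDisjoint
    intro v w x y hvw hxy hne p hp1 hp2
    rw [hgrid, hgrid] at hp1
    rw [hgrid, hgrid] at hp2
    have hab := hadj v w hvw
    have hcd := hadj x y hxy
    simp only [hgrid]
    by_cases hxv : x = v
    · have hwy : y ≠ w := by
        intro h; exact hne (Or.inl ⟨hxv, h⟩)
      rw [hxv] at hp2 hcd
      have hpv : p = pt q (col v) (slot v) := by
        rcases eq_or_ne (col w) (col y) with hcwy | hcwy
        · rw [← hcwy] at hp2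
          exact bicol_common q hq0 (col v) (col w) (slot v) (slot w) (slot y)
            hab (hslotinj w y hcwy (fun h => hwy h.symm)) hp1 hp2
        · exact (tricol q hq (col v) (col w) (col y) (slot v) (slot v) (slot w) (slot y)
            (hcolq v) (hcolq w) (hcolq y) (Ne.symm hab) (Ne.symm hcd) hcwy hp1 hp2).1
      exact Or.inl ⟨hpv, Or.inl hxv.symm⟩
    · by_cases hyv : y = v
      · have hxw : x ≠ w := by
          intro h; exact hne (Or.inr ⟨h, hyv⟩)
        rw [hyv] at hp2 hcd
        rw [segment_symm] at hp2
        have hpv : p = pt q (col v) (slot v) := by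
          rcases eq_or_ne (col w) (col x) with hcwx | hcwx
          · rw [← hcwx] at hp2
            exact bicol_common q hq0 (col v) (col w) (slot v) (slot w) (slot x)
              hab (hslotinj w x hcwx (fun h => hxw h.symm)) hp1 hp2
          · exact (tricol q hq (col v) (col w) (col x) (slot v) (slot v) (slot w) (slot x)
              (hcolq v) (hcolq w) (hcolq x) (Ne.symm hab) hcd hcwx hp1 hp2).1
        exact Or.inl ⟨hpv, Or.inr hyv.symm⟩
      · by_cases hxw : x = w
        · have hyv2 : y ≠ v := fun h => hyv h
          rw [hxw] at hp2 hcd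
          rw [segment_symm] at hp1
          have hpw : p = pt q (col w) (slot w) := by
            rcases eq_or_ne (col v) (col y) with hcvy | hcvy
            · rw [← hcvy] at hp2
              exact bicol_common q hq0 (col w) (col v) (slot w) (slot v) (slot y)
                (Ne.symm hab) (hslotinj v y hcvy (fun h => hyv2 h.symm)) hp1 hp2
            · exact (tricol q hq (col w) (col v) (col y) (slot w) (slot w) (slot v) (slot y)
                (hcolq w) (hcolq v) (hcolq y) hab (Ne.symm hcd) hcvy hp1 hp2).1
          exact Or.inr ⟨hpw, Or.inl hxw.symm⟩
        · by_cases hyw : y = w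
          · rw [hyw] at hp2 hcd
            rw [segment_symm] at hp1
            rw [segment_symm] at hp2
            have hpw : p = pt q (col w) (slot w) := by
              rcases eq_or_ne (col v) (col x) with hcvx | hcvx
              · rw [← hcvx] at hp2
                exact bicol_common q hq0 (col w) (col v) (slot w) (slot v) (slot x)
                  (Ne.symm hab) (hslotinj v x hcvx (fun h => hxv h.symm)) hp1 hp2
              · exact (tricol q hq (col w) (col v) (col x) (slot w) (slot w) (slot v) (slot x)
                  (hcolq w) (hcolq v) (hcolq x) hab hcd hcvx hp1 hp2).1
            exact Or.inr ⟨hpw, Or.inr hyw.symm⟩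
          · -- all four vertices distinct
            exfalso
            by_cases h1 : col v = col x
            · by_cases h2 : col w = col y
              · have hsvx : slot v ≠ slot x := hslotinj v x h1 (fun h => hxv h.symm)
                have hswy : slot w ≠ slot y := hslotinj w y h2 (fun h => hyw h.symm)
                rw [← h1, ← h2] at hp2
                rcases lt_or_gt_of_ne hsvx with hlt | hgt
                · have hwy2 : slot w < slot y := by
                    rcases lt_or_gt_of_ne hswy with h' | h'
                    · exact h'
                    · exact absurd h' (fun h'' => hX v w x y hvw hxy h1 h2 hlt h'')
                  exact bicol_order q hq0 (col v) (col w) (slot v) (slot x) (slot w) (slot y)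
                    hab hlt hwy2 hp1 hp2
                · have hwy2 : slot y < slot w := by
                    rcases lt_or_gt_of_ne hswy with h' | h'
                    · exact absurd hgt (fun h'' => hX x y v w hxy hvw h1.symm h2.symm h'' h')
                    · exact h'
                  exact bicol_order q hq0 (col v) (col w) (slot x) (slot v) (slot y) (slot w)
                    hab hgt hwy2 hp2 hp1
              · rw [← h1] at hp2
                have h := (tricol q hq (col v) (col w) (col y) (slot v) (slot x) (slot w) (slot y)
                  (hcolq v) (hcolq w) (hcolq y) (Ne.symm hab)
                  (fun hh => hcd (h1.symm.trans hh.symm)) h2 hp1 hp2).2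
                exact hxv ((hinj v x h1 h).symm)
            · by_cases h2 : col v = col y
              · rw [segment_symm] at hp2
                by_cases h3 : col w = col x
                · have hsvy : slot v ≠ slot y := hslotinj v y h2 (fun h => hyv h.symm)
                  have hswx : slot w ≠ slot x := hslotinj w x h3 (fun h => hxw h.symm)
                  rw [← h2, ← h3] at hp2
                  rcases lt_or_gt_of_ne hsvy with hlt | hgt
                  · have hwx2 : slot w < slot x := by
                      rcases lt_or_gt_of_ne hswx with h' | h'
                      · exact h'
                      · exact absurd h' (fun h'' => hX v w y x hvw hxy.symm h2 h3 hlt h'')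
                    exact bicol_order q hq0 (col v) (col w) (slot v) (slot y) (slot w) (slot x)
                      hab hlt hwx2 hp1 hp2
                  · have hwx2 : slot x < slot w := by
                      rcases lt_or_gt_of_ne hswx with h' | h'
                      · exact absurd hgt
                          (fun h'' => hX y x v w hxy.symm hvw h2.symm h3.symm h'' h')
                      · exact h'
                    exact bicol_order q hq0 (col v) (col w) (slot y) (slot v) (slot x) (slot w)
                      hab hgt hwx2 hp2 hp1
                · rw [← h2] at hp2
                  have h := (tricol q hq (col v) (col w) (col x) (slot v) (slot y) (slot w)
                    (slot x) (hcolq v) (hcolq w) (hcolq x) (Ne.symm hab)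
                    (fun hh => h1 hh.symm) (fun hh => h3 hh) hp1 hp2).2
                  exact hyv ((hinj v y h2 h).symm)
              · by_cases h3 : col w = col x
                · rw [segment_symm] at hp1
                  rw [← h3] at hp2
                  have h := (tricol q hq (col w) (col v) (col y) (slot w) (slot x) (slot v)
                    (slot y) (hcolq w) (hcolq v) (hcolq y) hab
                    (fun hh => (Ne.symm hcd) (hh.trans h3)) h2 hp1 hp2).2
                  exact hxw ((hinj w x h3 h).symm)
                · by_cases h4 : col w = col y
                  · rw [segment_symm] at hp1
                    rw [segment_symm, ← h4] at hp2
                    have h := (tricol q hq (col w) (col v) (col x) (slot w) (slot y) (slot v)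
                      (slot x) (hcolq w) (hcolq v) (hcolq x) hab
                      (fun hh => h3 hh.symm) h1 hp1 hp2).2
                    exact hyw ((hinj w y h4 h).symm)
                  · exact quadcol q hq (col v) (col w) (col x) (col y)
                      (slot v) (slot w) (slot x) (slot y)
                      (hcolq v) (hcolq w) (hcolq x) (hcolq y)
                      hab h1 h2 h3 h4 hcd hp1 hp2
  · -- InBox
    refine ⟨fun _ => 0, fun v => ?_⟩
    dsimp only
    refine ⟨?_, ?_, ?_, ?_, ?_, ?_⟩
    · rw [hP0]; positivity
    · rw [hP0]; push_cast; rw [zero_add]; exact_mod_cast hcolK v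
    · rw [hP1]; positivity
    · rw [hP1]; push_cast; rw [zero_add]
      exact_mod_cast Nat.mod_lt (col v ^ 2) hq0
    · rw [hP2]; positivity
    · rw [hP2]; push_cast; rw [zero_add]
      exact_mod_cast zv_bound (c := col v) hq0 (hslot v)

end DrawAux

namespace DrawAux

open Finset

variable {V : Type} [Fintype V] {G : SimpleGraph V}

section Layout

variable {T : ℕ} (L : TrackLayout V G T)

/-- number of vertices on track `i` -/
noncomputable def nT (i : Fin T) : ℕ := (Finset.univ.filter (fun v => L.track v = i)).card

/-- number of chunks of track `i` for chunk size `s` -/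
noncomputable def mC (s : ℕ) (i : Fin T) : ℕ := (nT L i + s - 1) / s

/-- total number of columns -/
noncomputable def CC (s : ℕ) : ℕ := ∑ i, mC L s i

/-- first column of track `i` -/
noncomputable def baseC (s : ℕ) (i : Fin T) : ℕ := ∑ j ∈ Finset.Iio i, mC L s j

/-- rank of a vertex within its track -/
noncomputable def rk (v : V) : ℕ :=
  (Finset.univ.filter (fun u => L.track u = L.track v ∧ L.pos u < L.pos v)).card

/-- column of a vertex -/
noncomputable def colOf (s : ℕ) (v : V) : ℕ := baseC L s (L.track v) + rk L v / s

/-- slot of a vertex within its column -/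
noncomputable def slotOf (s : ℕ) (v : V) : ℕ := rk L v % s

/-- number of nonempty tracks -/
noncomputable def tP : ℕ := (Finset.univ.filter (fun i : Fin T => ¬ (nT L i = 0))).card

lemma rk_lt (v : V) : rk L v < nT L (L.track v) := by
  apply Finset.card_lt_card
  rw [Finset.ssubset_iff_of_subset]
  · exact ⟨v, by simp, by simp⟩
  · intro u hu
    simp only [Finset.mem_filter, Finset.mem_univ, true_and] at hu ⊢
    exact hu.1

lemma rk_mono {u v : V} (ht : L.track u = L.track v) (hp : L.pos u < L.pos v) :
    rk L u < rk L v := by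
  apply Finset.card_lt_card
  rw [Finset.ssubset_iff_of_subset]
  · refine ⟨u, by simp [ht, hp], by simp⟩
  · intro x hx
    simp only [Finset.mem_filter, Finset.mem_univ, true_and] at hx ⊢
    exact ⟨hx.1.trans ht, hx.2.trans hp⟩

lemma rk_reflect {u v : V} (ht : L.track u = L.track v) (hr : rk L u < rk L v) :
    L.pos u < L.pos v := by
  rcases lt_trichotomy (L.pos u) (L.pos v) with h | h | h
  · exact h
  · exact absurd (by rw [L.inj u v ht h]) (Nat.ne_of_lt hr)
  · exact absurd (rk_mono L ht.symm h) (by omega)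

lemma rk_div_lt {s : ℕ} (hs : 0 < s) (v : V) : rk L v / s < mC L s (L.track v) := by
  have h1 : rk L v < nT L (L.track v) := rk_lt L v
  have h2 : 1 ≤ nT L (L.track v) := by omega
  unfold mC
  have h3 : nT L (L.track v) + s - 1 = (nT L (L.track v) - 1) + s := by omega
  rw [h3, Nat.add_div_right _ hs]
  have h4 := Nat.div_le_div_right (c := s) (by omega : rk L v ≤ nT L (L.track v) - 1)
  omega

lemma base_add (s : ℕ) (i : Fin T) : baseC L s i + mC L s i ≤ CC L s := by
  unfold baseC CC
  have h1 : mC L s i + ∑ j ∈ Finset.Iio i, mC L s j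
      = ∑ j ∈ insert i (Finset.Iio i), mC L s j := (Finset.sum_insert (by simp)).symm
  rw [add_comm, h1]
  exact Finset.sum_le_sum_of_subset (fun x _ => Finset.mem_univ x)

lemma base_mono (s : ℕ) {i j : Fin T} (hij : i < j) :
    baseC L s i + mC L s i ≤ baseC L s j := by
  unfold baseC
  have h1 : mC L s i + ∑ j ∈ Finset.Iio i, mC L s j
      = ∑ j ∈ insert i (Finset.Iio i), mC L s j := (Finset.sum_insert (by simp)).symm
  rw [add_comm, h1]
  apply Finset.sum_le_sum_of_subset
  intro x hx
  simp only [Finset.mem_insert, Finset.mem_Iio] at hx ⊢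
  rcases hx with rfl | hx
  · exact hij
  · exact hx.trans hij

lemma col_track {s : ℕ} (hs : 0 < s) {v w : V} (h : colOf L s v = colOf L s w) :
    L.track v = L.track w := by
  by_contra hne
  have key : ∀ {a b : V}, L.track a < L.track b → colOf L s a < colOf L s b := by
    intro a b hab
    calc colOf L s a < baseC L s (L.track a) + mC L s (L.track a) :=
          Nat.add_lt_add_left (rk_div_lt L hs a) _
      _ ≤ baseC L s (L.track b) := base_mono L s hab
      _ ≤ colOf L s b := Nat.le_add_right _ _
  rcases lt_or_gt_of_ne hne with hlt | hgt
  · exact absurd h (Nat.ne_of_lt (key hlt))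
  · exact absurd h.symm (Nat.ne_of_lt (key hgt))

lemma col_lt_CC {s : ℕ} (hs : 0 < s) (v : V) : colOf L s v < CC L s :=
  lt_of_lt_of_le (Nat.add_lt_add_left (rk_div_lt L hs v) _) (base_add L s _)

lemma colslot_inj {s : ℕ} (hs : 0 < s) {v w : V}
    (hc : colOf L s v = colOf L s w) (hsl : slotOf L s v = slotOf L s w) : v = w := by
  have ht := col_track L hs hc
  have hdiv : rk L v / s = rk L w / s := by
    unfold colOf at hc
    rw [ht] at hc
    omega
  have hrk : rk L v = rk L w := by
    have h1 := Nat.div_add_mod (rk L v) s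
    have h2 := Nat.div_add_mod (rk L w) s
    unfold slotOf at hsl
    rw [← h1, ← h2, hdiv, hsl]
  rcases lt_trichotomy (L.pos v) (L.pos w) with h | h | h
  · exact absurd (rk_mono L ht h) (by omega)
  · exact L.inj v w ht h
  · exact absurd (rk_mono L ht.symm h) (by omega)

lemma slot_lt {s : ℕ} (hs : 0 < s) (v : V) : slotOf L s v < s := Nat.mod_lt _ hs

lemma adj_col {s : ℕ} (hs : 0 < s) {v w : V} (h : G.Adj v w) :
    colOf L s v ≠ colOf L s w :=
  fun hc => L.proper v w h (col_track L hs hc)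

lemma noX_transfer {s : ℕ} (hs : 0 < s) : ∀ v w x y : V, G.Adj v w → G.Adj x y →
    colOf L s v = colOf L s x → colOf L s w = colOf L s y →
    slotOf L s v < slotOf L s x → slotOf L s y < slotOf L s w → False := by
  intro v w x y hvw hxy hcvx hcwy hsvx hsyw
  have htvx : L.track v = L.track x := col_track L hs hcvx
  have htwy : L.track w = L.track y := col_track L hs hcwy
  have hrk : ∀ {a b : V}, L.track a = L.track b → colOf L s a = colOf L s b →
      slotOf L s a < slotOf L s b → rk L a < rk L b := by
    intro a b htab hcab hsab
    have hdiv : rk L a / s = rk L b / s := by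
      unfold colOf at hcab
      rw [htab] at hcab
      omega
    have h1 := Nat.div_add_mod (rk L a) s
    have h2 := Nat.div_add_mod (rk L b) s
    unfold slotOf at hsab
    calc rk L a = s * (rk L a / s) + rk L a % s := h1.symm
      _ < s * (rk L a / s) + rk L b % s := Nat.add_lt_add_left hsab _
      _ = s * (rk L b / s) + rk L b % s := by rw [hdiv]
      _ = rk L b := h2
  have hpvx : L.pos v < L.pos x := rk_reflect L htvx (hrk htvx hcvx hsvx)
  have hpyw : L.pos y < L.pos w := rk_reflect L htwy.symm (hrk htwy.symm hcwy.symm hsyw)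
  exact L.noX v w x y hvw hxy htvx htwy (L.proper v w hvw) hpvx hpyw

lemma sum_nT : ∑ i, nT L i = Fintype.card V := by
  unfold nT
  rw [← Finset.card_univ]
  exact (Finset.card_eq_sum_card_fiberwise (fun x _ => Finset.mem_univ (L.track x))).symm

lemma nT_le (i : Fin T) : nT L i ≤ Fintype.card V := by
  unfold nT
  rw [← Finset.card_univ]
  exact Finset.card_filter_le _ _

lemma tP_le : tP L ≤ T := by
  unfold tP
  calc (Finset.univ.filter _).card ≤ (Finset.univ : Finset (Fin T)).card :=
        Finset.card_filter_le _ _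
    _ = T := by simp

lemma CC_big : CC L (max (Fintype.card V) 1) ≤ T := by
  unfold CC
  calc ∑ i, mC L (max (Fintype.card V) 1) i ≤ ∑ _i : Fin T, 1 := by
        apply Finset.sum_le_sum
        intro i _
        unfold mC
        set s := max (Fintype.card V) 1 with hs
        have hs0 : 0 < s := by positivity
        have hnle : nT L i ≤ s := le_trans (nT_le L i) (le_max_left _ _)
        have h1 : nT L i + s - 1 < 2 * s := by omega
        have h2 : (nT L i + s - 1) / s < 2 := Nat.div_lt_of_lt_mul (by omega)
        omega
    _ = T := by simp

lemma chunk_bound {d : ℕ} (hd : 0 < d) :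
    d * CC L d ≤ Fintype.card V + (d - 1) * tP L := by
  unfold CC tP
  calc d * ∑ i, mC L d i = ∑ i, d * mC L d i := Finset.mul_sum _ _ _
    _ ≤ ∑ i, (nT L i + (if nT L i = 0 then 0 else d - 1)) := by
        apply Finset.sum_le_sum
        intro i _
        unfold mC
        by_cases h0 : nT L i = 0
        · simp [h0, Nat.div_eq_of_lt (by omega : d - 1 < d)]
        · simp only [h0, if_false]
          have := Nat.div_mul_le_self (nT L i + d - 1) d
          have h2 : 1 ≤ nT L i := by omega
          calc d * ((nT L i + d - 1) / d) = ((nT L i + d - 1) / d) * d := by ring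
            _ ≤ nT L i + d - 1 := Nat.div_mul_le_self _ _
            _ = nT L i + (d - 1) := by omega
    _ = ∑ i, nT L i + ∑ i, (if nT L i = 0 then 0 else d - 1) := Finset.sum_add_distrib
    _ ≤ Fintype.card V + (d - 1) * (Finset.univ.filter (fun i : Fin T => ¬ (nT L i = 0))).card := by
        rw [sum_nT]
        apply Nat.add_le_add_left
        rw [Finset.sum_ite, Finset.sum_const, Finset.sum_const]
        simp [mul_comm]

end Layout

/-- the trivial track layout with one vertex per track -/
noncomputable def trivialLayout (V : Type) [Fintype V] (G : SimpleGraph V) :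
    TrackLayout V G (Fintype.card V) where
  track v := (Fintype.equivFin V) v
  pos _ := 0
  inj v w h _ := (Fintype.equivFin V).injective h
  proper v w hadj h := (G.ne_of_adj hadj) ((Fintype.equivFin V).injective h)
  noX _ _ _ _ _ _ _ _ _ _ h := absurd h (lt_irrefl 0)

end DrawAux


set_option maxHeartbeats 1000000 in
open DrawAux in
/-- For every `n`-vertex graph `G` with track-number `tn(G)`, and
every real `r` with `1 ≤ r ≤ n / tn(G)`, `G` has a three-dimensional drawing of
dimensions at most `(2n/r) × (4n/r) × 4n`; thus `G` has a drawing with volume at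
most `32 n³ / r²` and aspect ratio at most `2r`. -/
theorem drawing_aspect_ratio_tradeoff {V : Type} [Fintype V] (G : SimpleGraph V)
    (r : ℝ) (hr1 : 1 ≤ r)
    (hr2 : r ≤ (Fintype.card V : ℝ) / (trackNumber V G : ℝ)) :
    ∃ (X Y Z : ℕ) (D : Drawing3D V G), D.InBox X Y Z ∧
      (X : ℝ) ≤ 2 * (Fintype.card V : ℝ) / r ∧
      (Y : ℝ) ≤ 4 * (Fintype.card V : ℝ) / r ∧
      (Z : ℝ) ≤ 4 * (Fintype.card V : ℝ) ∧
      (X : ℝ) * (Y : ℝ) * (Z : ℝ) ≤ 32 * (Fintype.card V : ℝ) ^ 3 / r ^ 2 ∧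
      (max X (max Y Z) : ℝ) ≤ 2 * r * (min X (min Y Z) : ℝ) := by
  classical
  have hr0 : (0 : ℝ) < r := lt_of_lt_of_le one_pos hr1
  by_cases hn0 : Fintype.card V = 0
  · exfalso
    rw [hn0] at hr2
    simp only [Nat.cast_zero, zero_div] at hr2
    linarith
  set n := Fintype.card V with hn
  have hn1 : 1 ≤ n := Nat.one_le_iff_ne_zero.mpr hn0
  have hSne : {t : ℕ | Nonempty (TrackLayout V G t)}.Nonempty :=
    ⟨n, ⟨trivialLayout V G⟩⟩
  obtain ⟨L⟩ : Nonempty (TrackLayout V G (trackNumber V G)) := Nat.sInf_mem hSne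
  set t := trackNumber V G with ht
  have ht0 : t ≠ 0 := by
    intro h
    have hv : Nonempty V := Fintype.card_pos_iff.mp (by omega)
    exact Fin.elim0 (h ▸ L.track hv.some)
  have ht1 : 1 ≤ t := Nat.one_le_iff_ne_zero.mpr ht0
  have htpos : (0 : ℝ) < (t : ℝ) := by exact_mod_cast Nat.pos_of_ne_zero ht0
  have htr : r * (t : ℝ) ≤ (n : ℝ) := (le_div_iff₀ htpos).mp hr2
  set K := ⌊2 * (n : ℝ) / r⌋₊ with hK
  have hKle : (K : ℝ) ≤ 2 * (n : ℝ) / r := Nat.floor_le (by positivity)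
  have hKgt : 2 * (n : ℝ) / r < (K : ℝ) + 1 := Nat.lt_floor_add_one _
  have h2tK : 2 * t ≤ K := by
    apply Nat.le_floor
    push_cast
    rw [le_div_iff₀ hr0]
    nlinarith
  have hKn2 : K ≤ 2 * n := by
    have : (K : ℝ) ≤ 2 * (n : ℝ) := by
      calc (K : ℝ) ≤ 2 * n / r := hKle
        _ ≤ 2 * n / 1 := by
            apply div_le_div_of_nonneg_left (by positivity) one_pos hr1
        _ = 2 * n := by ring
    exact_mod_cast this
  have hK0 : K ≠ 0 := by omega
  -- minimal chunk size
  have hex : ∃ s : ℕ, 0 < s ∧ CC L s ≤ K := by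
    refine ⟨max n 1, by positivity, ?_⟩
    exact le_trans (CC_big L) (by omega)
  have key : ∃ s : ℕ, (0 < s ∧ CC L s ≤ K) ∧ (1 < s → K + 1 ≤ CC L (s - 1)) := by
    refine ⟨Nat.find hex, Nat.find_spec hex, ?_⟩
    intro h1s
    by_contra hcon
    exact Nat.find_min hex (by omega : Nat.find hex - 1 < Nat.find hex)
      ⟨by omega, by omega⟩
  obtain ⟨s, ⟨hs0, hsK⟩, hmin⟩ := key
  -- the prime
  obtain ⟨q, hq, hKq, hq2K⟩ := Nat.exists_prime_lt_and_le_two_mul K hK0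
  -- the drawing
  obtain ⟨D, hbox⟩ := construct (G := G) (colOf L s) (slotOf L s) q s K hq hs0
    (fun v => lt_of_lt_of_le (col_lt_CC L hs0 v) hsK) hKq (fun v => slot_lt L hs0 v)
    (fun v w hc hsl => colslot_inj L hs0 hc hsl)
    (fun v w h => adj_col L hs0 h)
    (noX_transfer L hs0)
  -- key arithmetic bounds on Z = q * s
  have hq2K' : (q : ℝ) ≤ 2 * K := by exact_mod_cast hq2K
  have hZ4n : ((q * s : ℕ) : ℝ) ≤ 4 * (n : ℝ) ∧ ((q * s : ℕ) : ℝ) ≤ 2 * r * (K : ℝ) := by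
    rcases eq_or_lt_of_le (show 1 ≤ s from hs0) with hs1 | hs2
    · -- s = 1
      have hs1' : s = 1 := hs1.symm
      rw [hs1', mul_one]
      constructor
      · calc (q : ℝ) ≤ 2 * K := hq2K'
          _ ≤ 2 * (2 * n) := by exact_mod_cast Nat.mul_le_mul_left 2 hKn2
          _ = 4 * n := by ring
      · calc (q : ℝ) ≤ 2 * K := hq2K'
          _ ≤ 2 * r * K := by nlinarith [Nat.cast_nonneg (α := ℝ) K]
    · -- s ≥ 2
      have hd : 1 ≤ s - 1 := by omega
      have hCd : K + 1 ≤ CC L (s - 1) := hmin (by omega)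
      have hchunk := chunk_bound L (d := s - 1) (by omega)
      have hF : (s - 1 : ℕ) * (K + 1) ≤ n + (s - 1 - 1) * tP L := by
        calc (s - 1) * (K + 1) ≤ (s - 1) * CC L (s - 1) :=
              Nat.mul_le_mul_left _ hCd
          _ ≤ n + (s - 1 - 1) * tP L := by
              have := chunk_bound L (d := s - 1) (by omega)
              omega
      have htP : 2 * tP L ≤ K := le_trans (by have := tP_le L; omega) h2tK
      -- s * (K+1) ≤ 2n over ℤ
      have hmain : (s : ℝ) * ((K : ℝ) + 1) ≤ 2 * n := by
        have hFZ : ((s : ℝ) - 1) * ((K : ℝ) + 1) ≤ (n : ℝ) + ((s : ℝ) - 1 - 1) * (tP L : ℝ) := by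
          have := hF
          have hcast : (((s - 1 : ℕ) : ℝ)) * (((K : ℕ) : ℝ) + 1) ≤ (n : ℝ) + ((s - 1 - 1 : ℕ) : ℝ) * (tP L : ℝ) := by
            exact_mod_cast this
          rwa [Nat.cast_sub (by omega), Nat.cast_sub (by omega), Nat.cast_sub (by omega),
            Nat.cast_one] at hcast
        have htPZ : 2 * (tP L : ℝ) ≤ (K : ℝ) := by exact_mod_cast htP
        have hsZ : (2 : ℝ) ≤ (s : ℝ) := by exact_mod_cast hs2
        nlinarith [hFZ, htPZ, hsZ, mul_nonneg (by linarith : (0:ℝ) ≤ (s:ℝ) - 2)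
          (by linarith : (0:ℝ) ≤ (K:ℝ) + 1 - 2 * (tP L : ℝ))]
      have hsr : (s : ℝ) < r := by
        have h2n : 2 * (n : ℝ) < r * ((K : ℝ) + 1) := by
          rw [div_lt_iff₀ hr0] at hKgt
          linarith
        nlinarith [htpos]
      constructor
      · push_cast
        nlinarith [hmain, hq2K', Nat.cast_nonneg (α := ℝ) s, Nat.cast_nonneg (α := ℝ) K]
      · push_cast
        nlinarith [hsr, hq2K', Nat.cast_nonneg (α := ℝ) s, Nat.cast_nonneg (α := ℝ) K,
          Nat.cast_nonneg (α := ℝ) q]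
  obtain ⟨hZ1, hZ2⟩ := hZ4n
  have hY : (q : ℝ) ≤ 4 * (n : ℝ) / r := by
    calc (q : ℝ) ≤ 2 * K := hq2K'
      _ ≤ 2 * (2 * n / r) := by linarith
      _ = 4 * n / r := by ring
  have hX : (K : ℝ) ≤ 2 * (n : ℝ) / r := hKle
  refine ⟨K, q, q * s, D, hbox, hX, hY, hZ1, ?_, ?_⟩
  · -- volume
    have h1 : (0 : ℝ) ≤ (q : ℝ) := Nat.cast_nonneg q
    have h2 : (0 : ℝ) ≤ (K : ℝ) := Nat.cast_nonneg K
    have h3 : (0 : ℝ) ≤ ((q * s : ℕ) : ℝ) := Nat.cast_nonneg _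
    have hm1 : (K : ℝ) * (q : ℝ) ≤ (2 * n / r) * (4 * n / r) :=
      mul_le_mul hX hY h1 (by positivity)
    have hm2 : (K : ℝ) * (q : ℝ) * ((q * s : ℕ) : ℝ) ≤ (2 * n / r) * (4 * n / r) * (4 * n) :=
      mul_le_mul hm1 hZ1 h3 (by positivity)
    calc (K : ℝ) * (q : ℝ) * ((q * s : ℕ) : ℝ) ≤ (2 * n / r) * (4 * n / r) * (4 * n) := hm2
      _ = 32 * (n : ℝ) ^ 3 / r ^ 2 := by field_simp; ring
  · -- aspect ratio
    have hKq' : K ≤ q := hKq.le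
    have hqqs : q ≤ q * s := Nat.le_mul_of_pos_right q hs0
    have c1 : (K : ℝ) ≤ (q : ℝ) := by exact_mod_cast hKq'
    have c2 : (q : ℝ) ≤ ((q * s : ℕ) : ℝ) := by exact_mod_cast hqqs
    rw [max_eq_right c2, max_eq_right (c1.trans c2), min_eq_left c2, min_eq_left c1]
    exact hZ2
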